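/- For every positive integer n, the volume of the set {(x_0, x_1, …, x_n) ∈ ℝ^{n+1} : 0 < x_0 < x_1 < ⋯ < x_n and x_j < j for each j = 1, …, n} equals n^n/(n+1)!. -/

import Mathlib

open Nat Finset MeasureTheory
open scoped ENNReal

namespace Stmt8Aux

/-- count of coordinates with value < t -/
def cnt (n : ℕ) (r : Fin (n + 1) → ℕ) (t : ℕ) : ℕ :=
  (Finset.univ.filter fun i => r i < t).card

/-- the parking-type condition -/
def P (n : ℕ) (r : Fin (n + 1) → ℕ) : Prop :=
  ∀ j : ℕ, 1 ≤ j → j ≤ n → j + 1 ≤ cnt n r j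

lemma cnt_of_le {n : ℕ} (r : Fin (n + 1) → ℕ) (hr : ∀ i, r i < n) {t : ℕ} (h : n ≤ t) :
    cnt n r t = n + 1 := by
  have : (Finset.univ.filter fun i : Fin (n+1) => r i < t) = Finset.univ := by
    refine Finset.filter_true_of_mem fun i _ => lt_of_lt_of_le (hr i) h
  simp [cnt, this]

/-- splitting a count into two pieces -/
lemma card_filter_split {n : ℕ} (p q : Fin (n+1) → Prop) [DecidablePred p] [DecidablePred q] :
    (Finset.univ.filter p).card
      = (Finset.univ.filter fun i => p i ∧ q i).card
        + (Finset.univ.filter fun i => p i ∧ ¬ q i).card := by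
  rw [← Finset.filter_filter, ← Finset.filter_filter]
  exact (Finset.card_filter_add_card_filter_not (s := Finset.univ.filter p) q).symm

/-- key count computation for shifted residues -/
lemma cnt_shift {n : ℕ} (r : Fin (n + 1) → ℕ) (hr : ∀ i, r i < n) {s : ℕ} (hs : s < n)
    {j : ℕ} (hj : 1 ≤ j) (hjn : j ≤ n) :
    cnt n (fun i => (r i + s) % n) j + cnt n r (n - s)
      = (if s < j then cnt n r (j - s) else 0) + cnt n r (n - s + j) := by
  classical
  have key : cnt n (fun i => (r i + s) % n) j
      = (Finset.univ.filter fun i => r i < n - s ∧ r i + s < j).card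
        + (Finset.univ.filter fun i => ¬ (r i < n - s) ∧ r i < n - s + j).card := by
    rw [cnt, card_filter_split (fun i => (r i + s) % n < j) (fun i => r i < n - s)]
    congr 1
    · apply Finset.card_bij (fun a _ => a) ?_ (fun _ _ _ _ h => h)
        (fun b hb => ⟨b, by
          simp only [Finset.mem_filter, Finset.mem_univ, true_and] at hb ⊢
          have hmod : (r b + s) % n = r b + s := Nat.mod_eq_of_lt (by omega)
          refine ⟨by omega, hb.1⟩, rfl⟩)
      intro a ha
      simp only [Finset.mem_filter, Finset.mem_univ, true_and] at ha ⊢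
      have hmod : (r a + s) % n = r a + s := Nat.mod_eq_of_lt (by omega)
      omega
    · apply Finset.card_bij (fun a _ => a) ?_ (fun _ _ _ _ h => h)
        (fun b hb => ⟨b, by
          simp only [Finset.mem_filter, Finset.mem_univ, true_and] at hb ⊢
          have h1 : n ≤ r b + s := by omega
          have hmod : (r b + s) % n = r b + s - n := by
            rw [Nat.mod_eq_sub_mod h1, Nat.mod_eq_of_lt (by have := hr b; omega)]
          refine ⟨by omega, hb.1⟩, rfl⟩)
      intro a ha
      simp only [Finset.mem_filter, Finset.mem_univ, true_and] at ha ⊢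
      have h1 : n ≤ r a + s := by omega
      have hmod : (r a + s) % n = r a + s - n := by
        rw [Nat.mod_eq_sub_mod h1, Nat.mod_eq_of_lt (by have := hr a; omega)]
      omega
  rw [key]
  have hA : (Finset.univ.filter fun i : Fin (n+1) => r i < n - s ∧ r i + s < j).card
      = if s < j then cnt n r (j - s) else 0 := by
    by_cases hsj : s < j
    · rw [if_pos hsj, cnt]
      congr 1
      apply Finset.filter_congr
      intro i _
      constructor
      · intro h; omega
      · intro h; omega
    · rw [if_neg hsj]
      rw [Finset.card_eq_zero, Finset.filter_eq_empty_iff]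
      intro i _
      omega
  have hB : (Finset.univ.filter fun i : Fin (n+1) => ¬ (r i < n - s) ∧ r i < n - s + j).card
        + cnt n r (n - s) = cnt n r (n - s + j) := by
    rw [cnt, cnt, card_filter_split (fun i => r i < n - s + j) (fun i => r i < n - s)]
    have e1 : (Finset.univ.filter fun i : Fin (n+1) => r i < n - s + j ∧ r i < n - s)
        = Finset.univ.filter fun i => r i < n - s := by
      apply Finset.filter_congr; intro i _; constructor
      · intro h; exact h.2
      · intro h; exact ⟨by omega, h⟩
    have e2 : (Finset.univ.filter fun i : Fin (n+1) => r i < n - s + j ∧ ¬ (r i < n - s))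
        = Finset.univ.filter fun i => ¬ (r i < n - s) ∧ r i < n - s + j := by
      apply Finset.filter_congr; intro i _; constructor
      · intro h; exact ⟨h.2, h.1⟩
      · intro h; exact ⟨h.2, h.1⟩
    rw [e1, e2]
    omega
  omega

/-- the "last argmin" property -/
def Good (n : ℕ) (N : ℕ → ℕ) (u : ℕ) : Prop :=
  (∀ v, 1 ≤ v → v ≤ u → N u + v ≤ N v + u) ∧
  (∀ v, u < v → v ≤ n → N u + v + 1 ≤ N v + u)

lemma P_shift_iff {n : ℕ} (hn : 0 < n) (r : Fin (n + 1) → ℕ) (hr : ∀ i, r i < n)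
    {s : ℕ} (hs : s < n) :
    P n (fun i => (r i + s) % n) ↔ Good n (cnt n r) (n - s) := by
  constructor
  · intro h
    constructor
    · intro v hv1 hvu
      have h1 := h (v + s) (by omega) (by omega)
      have h2 := cnt_shift r hr hs (j := v + s) (by omega) (by omega)
      rw [if_pos (by omega : s < v + s)] at h2
      have e1 : v + s - s = v := by omega
      have e2 : cnt n r (n - s + (v + s)) = n + 1 := cnt_of_le r hr (by omega)
      rw [e1, e2] at h2
      omega
    · intro v huv hvn
      have h1 := h (v - (n - s)) (by omega) (by omega)
      have h2 := cnt_shift r hr hs (j := v - (n - s)) (by omega) (by omega)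
      rw [if_neg (by omega : ¬ s < v - (n - s))] at h2
      have e1 : n - s + (v - (n - s)) = v := by omega
      rw [e1] at h2
      omega
  · intro hg j hj1 hjn
    obtain ⟨hg1, hg2⟩ := hg
    have h2 := cnt_shift r hr hs hj1 hjn
    by_cases hsj : s < j
    · rw [if_pos hsj] at h2
      have h1 := hg1 (j - s) (by omega) (by omega)
      have e2 : cnt n r (n - s + j) = n + 1 := cnt_of_le r hr (by omega)
      rw [e2] at h2
      omega
    · rw [if_neg hsj] at h2
      have h1 := hg2 (n - s + j) (by omega) (by omega)
      omega

lemma exists_good {n : ℕ} (hn : 0 < n) (N : ℕ → ℕ) :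
    ∃ u, 1 ≤ u ∧ u ≤ n ∧ Good n N u := by
  classical
  have hne : (Finset.Icc 1 n).Nonempty := ⟨1, by rw [Finset.mem_Icc]; omega⟩
  obtain ⟨u0, hu0, hu0eq⟩ := Finset.exists_mem_eq_inf' hne (fun v => (N v : ℤ) - v)
  have hGne : ((Finset.Icc 1 n).filter
      (fun v => (N v : ℤ) - v = (Finset.Icc 1 n).inf' hne (fun v => (N v : ℤ) - v))).Nonempty :=
    ⟨u0, Finset.mem_filter.2 ⟨hu0, hu0eq.symm⟩⟩
  have hmm := ((Finset.Icc 1 n).filter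
    (fun v => (N v : ℤ) - v = (Finset.Icc 1 n).inf' hne (fun v => (N v : ℤ) - v))).max'_mem hGne
  rw [Finset.mem_filter, Finset.mem_Icc] at hmm
  obtain ⟨⟨hu1, hun⟩, hcu⟩ := hmm
  set u := ((Finset.Icc 1 n).filter
    (fun v => (N v : ℤ) - v = (Finset.Icc 1 n).inf' hne (fun v => (N v : ℤ) - v))).max' hGne
  refine ⟨u, hu1, hun, ?_, ?_⟩
  · intro v hv1 hvu
    have hle : (Finset.Icc 1 n).inf' hne (fun v => (N v : ℤ) - v) ≤ (N v : ℤ) - v :=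
      Finset.inf'_le _ (by rw [Finset.mem_Icc]; omega)
    omega
  · intro v huv hvn
    have hmem : v ∈ Finset.Icc 1 n := by rw [Finset.mem_Icc]; omega
    have hle : (Finset.Icc 1 n).inf' hne (fun v => (N v : ℤ) - v) ≤ (N v : ℤ) - v :=
      Finset.inf'_le _ hmem
    have hne' : (N v : ℤ) - v ≠ (Finset.Icc 1 n).inf' hne (fun v => (N v : ℤ) - v) := by
      intro hvv
      have : v ≤ u := Finset.le_max' _ v (Finset.mem_filter.2 ⟨hmem, hvv⟩)
      omega
    omega

lemma good_unique {n : ℕ} (N : ℕ → ℕ) {u u' : ℕ}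
    (hu : Good n N u) (hu' : Good n N u') (h1 : 1 ≤ u) (h2 : u ≤ n)
    (h1' : 1 ≤ u') (h2' : u' ≤ n) : u = u' := by
  rcases lt_trichotomy u u' with h | h | h
  · have a1 := hu.2 u' h h2'
    have a2 := hu'.1 u h1 (by omega)
    omega
  · exact h
  · have a1 := hu'.2 u h h2
    have a2 := hu.1 u' h1' (by omega)
    omega

lemma existsUnique_shift {n : ℕ} (hn : 0 < n) (r : Fin (n + 1) → ℕ) (hr : ∀ i, r i < n) :
    ∃! s : Fin n, P n (fun i => (r i + (s : ℕ)) % n) := by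
  obtain ⟨u, hu1, hun, hug⟩ := exists_good hn (cnt n r)
  refine ⟨⟨n - u, by omega⟩, ?_, ?_⟩
  · show P n fun i => (r i + (n - u)) % n
    rw [P_shift_iff hn r hr (show n - u < n by omega)]
    have : n - (n - u) = u := by omega
    rw [this]
    exact hug
  · intro s hs
    have hsn : (s : ℕ) < n := s.2
    rw [P_shift_iff hn r hr hsn] at hs
    have := good_unique (cnt n r) hs hug (by omega) (by omega) hu1 hun
    apply Fin.ext
    show (s : ℕ) = n - u
    omega


lemma existsUnique_finshift {n : ℕ} (hn : 0 < n) (q : Fin (n + 1) → Fin n) :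
    ∃! s : Fin n, P n (fun i => ((q i + s : Fin n) : ℕ)) := by
  have e : ∀ s : Fin n, (fun i => ((q i + s : Fin n) : ℕ))
      = fun i => ((q i : ℕ) + (s : ℕ)) % n := by
    intro s; funext i; exact Fin.val_add _ _
  obtain ⟨s, hs, hu⟩ := existsUnique_shift hn (fun i => (q i : ℕ)) (fun i => (q i).2)
  refine ⟨s, ?_, fun t ht => hu t ?_⟩
  · show P n fun i => ((q i + s : Fin n) : ℕ)
    rw [e s]; exact hs
  · have ht' : P n fun i => ((q i + t : Fin n) : ℕ) := ht
    rw [e t] at ht'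
    exact ht' 

lemma card_good {n : ℕ} (hn : 0 < n) [DecidablePred (fun r : Fin (n + 1) → Fin n =>
      P n (fun i => ((r i : ℕ))))] :
    ((Finset.univ.filter fun r : Fin (n + 1) → Fin n =>
        P n (fun i => ((r i : ℕ)))).card) * n = n ^ (n + 1) := by
  classical
  haveI : NeZero n := ⟨hn.ne'⟩
  have key : ((Finset.univ.filter fun r : Fin (n + 1) → Fin n =>
      P n (fun i => ((r i : ℕ)))) ×ˢ (Finset.univ : Finset (Fin n))).card
      = (Finset.univ : Finset (Fin (n + 1) → Fin n)).card := by
    apply Finset.card_nbij' (fun p : (Fin (n + 1) → Fin n) × Fin n => fun i => p.1 i + p.2)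
      (fun q => (fun i => q i + (existsUnique_finshift hn q).choose,
                 -(existsUnique_finshift hn q).choose))
    · intro a _; exact Finset.mem_univ _
    · intro q _
      refine Finset.mem_coe.2 (Finset.mem_product.2 ?_)
      refine ⟨Finset.mem_filter.2 ⟨Finset.mem_univ _, ?_⟩, Finset.mem_univ _⟩
      exact (existsUnique_finshift hn q).choose_spec.1
    · intro p hp
      rw [Finset.mem_coe, Finset.mem_product, Finset.mem_filter] at hp
      have hgood := hp.1.2
      -- the chosen shift for q := p.1 + p.2 must be -p.2
      have hspec := (existsUnique_finshift hn (fun i => p.1 i + p.2)).choose_spec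
      have h0 : P n (fun i => (((fun i => p.1 i + p.2) i + (-p.2) : Fin n) : ℕ)) := by
        have : (fun i => (((p.1 i + p.2) + (-p.2) : Fin n) : ℕ)) = fun i => ((p.1 i : ℕ)) := by
          funext i; congr 1; abel
        simpa [this] using hgood
      have huniq := hspec.2 (-p.2) h0
      refine Prod.ext ?_ ?_
      · funext i
        show ((p.1 i + p.2) + (existsUnique_finshift hn (fun i => p.1 i + p.2)).choose) = p.1 i
        rw [← huniq]; abel
      · show (-(existsUnique_finshift hn (fun i => p.1 i + p.2)).choose : Fin n) = p.2
        rw [← huniq]; abel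
    · intro q _
      funext i
      show (q i + (existsUnique_finshift hn q).choose)
          + (-(existsUnique_finshift hn q).choose) = q i
      abel
  simp only [Finset.card_product, Finset.card_univ, Fintype.card_fun, Fintype.card_fin] at key
  exact key

variable {n : ℕ}

/-- the main set -/
def S (n : ℕ) : Set (Fin (n + 1) → ℝ) :=
  {x : Fin (n + 1) → ℝ |
    0 < x ⟨0, Nat.succ_pos _⟩ ∧
    (∀ i j : Fin (n + 1), i < j → x i < x j) ∧
    (∀ i : Fin (n + 1), ∀ j : ℕ, 1 ≤ j → j ≤ n → (i : ℕ) = j → x i < j)}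

/-- the symmetrized set -/
def T (n : ℕ) : Set (Fin (n + 1) → ℝ) :=
  {y | (∀ i, y i ∈ Set.Ioo (0 : ℝ) n) ∧
    ∀ j : ℕ, 1 ≤ j → j ≤ n → j + 1 ≤ (Finset.univ.filter fun i => y i < (j : ℝ)).card}

lemma measurableSet_S : MeasurableSet (S n) := by
  have h1 : MeasurableSet {x : Fin (n+1) → ℝ | 0 < x ⟨0, Nat.succ_pos _⟩} :=
    measurableSet_lt measurable_const (measurable_pi_apply _)
  have h2 : ∀ i j : Fin (n+1), MeasurableSet {x : Fin (n+1) → ℝ | x i < x j} := fun i j =>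
    measurableSet_lt (measurable_pi_apply _) (measurable_pi_apply _)
  have h3 : ∀ (i : Fin (n+1)) (j : ℕ), MeasurableSet {x : Fin (n+1) → ℝ | x i < (j:ℝ)} :=
    fun i j => measurableSet_lt (measurable_pi_apply _) measurable_const
  simp only [S, Set.setOf_and, Set.setOf_forall]
  refine h1.inter (MeasurableSet.inter ?_ ?_)
  · exact MeasurableSet.iInter fun i => MeasurableSet.iInter fun j =>
      MeasurableSet.iInter fun _ => h2 i j
  · exact MeasurableSet.iInter fun i => MeasurableSet.iInter fun j =>
      MeasurableSet.iInter fun _ => MeasurableSet.iInter fun _ =>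
      MeasurableSet.iInter fun _ => h3 i j

lemma volume_eq_of_fst {i j : Fin (n + 1)} (hij : i ≠ j) :
    volume {y : Fin (n + 1) → ℝ | y i = y j} = 0 := by
  have hset : {y : Fin (n + 1) → ℝ | y i = y j} =
      (LinearMap.ker ((LinearMap.proj i : (Fin (n+1) → ℝ) →ₗ[ℝ] ℝ)
        - LinearMap.proj j) : Set (Fin (n+1) → ℝ)) := by
    ext y
    simp only [Set.mem_setOf_eq, SetLike.mem_coe, LinearMap.mem_ker, LinearMap.sub_apply,
      LinearMap.proj_apply, sub_eq_zero]
  rw [hset]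
  apply Measure.addHaar_submodule
  intro htop
  have hzero := LinearMap.ker_eq_top.mp htop
  have h2 := LinearMap.congr_fun hzero (Pi.single i (1:ℝ))
  simp only [LinearMap.sub_apply, LinearMap.proj_apply, LinearMap.zero_apply,
    Pi.single_apply, if_pos rfl] at h2
  rw [if_neg (Ne.symm hij)] at h2
  norm_num at h2

lemma volume_ties : volume {y : Fin (n + 1) → ℝ | ∃ i j, i ≠ j ∧ y i = y j} = 0 := by
  have : {y : Fin (n + 1) → ℝ | ∃ i j, i ≠ j ∧ y i = y j}
      = ⋃ i, ⋃ j, {y : Fin (n + 1) → ℝ | i ≠ j ∧ y i = y j} := by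
    ext y; simp [Set.mem_iUnion]
  rw [this]
  refine measure_iUnion_null fun i => measure_iUnion_null fun j => ?_
  by_cases hij : i = j
  · subst hij
    convert measure_empty (μ := (volume : Measure (Fin (n+1) → ℝ)))
    ext y; simp
  · exact measure_mono_null (fun y hy => hy.2) (volume_eq_of_fst hij)

lemma volume_single {i : Fin (n + 1)} (c : ℝ) :
    volume {y : Fin (n + 1) → ℝ | y i = c} = 0 := by
  classical
  have : {y : Fin (n + 1) → ℝ | y i = c}
      = Set.pi Set.univ (fun k => if k = i then {c} else Set.univ) := by
    ext y
    simp only [Set.mem_setOf_eq, Set.mem_pi, Set.mem_univ, forall_true_left]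
    constructor
    · intro h k; by_cases hk : k = i <;> simp [hk, h]
    · intro h; have := h i; simpa using this
  rw [this, volume_pi_pi]
  apply Finset.prod_eq_zero (Finset.mem_univ i)
  simp

lemma volume_ints : volume {y : Fin (n + 1) → ℝ | ∃ i, ∃ k : ℤ, y i = (k : ℝ)} = 0 := by
  have : {y : Fin (n + 1) → ℝ | ∃ i, ∃ k : ℤ, y i = (k : ℝ)}
      = ⋃ i, ⋃ k : ℤ, {y : Fin (n + 1) → ℝ | y i = (k : ℝ)} := by
    ext y; simp [Set.mem_iUnion]
  rw [this]
  exact measure_iUnion_null fun i => measure_iUnion_null fun k => volume_single _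

lemma measurePreserving_comp (π : Equiv.Perm (Fin (n + 1))) :
    MeasurePreserving (fun y : Fin (n + 1) → ℝ => y ∘ π) volume volume := by
  have h := MeasurePreserving.symm _
    (volume_measurePreserving_piCongrLeft (fun _ : Fin (n + 1) => ℝ) π)
  have e : (fun y : Fin (n + 1) → ℝ => y ∘ π)
      = ⇑(MeasurableEquiv.piCongrLeft (fun _ : Fin (n + 1) => ℝ) π).symm := by
    funext y
    funext i
    show y (π i) = (Equiv.piCongrLeft (fun _ : Fin (n + 1) => ℝ) π).symm y i
    rw [Equiv.piCongrLeft_symm_apply]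
  rw [e]
  exact h

lemma card_filter_comp (π : Equiv.Perm (Fin (n + 1))) (p : Fin (n + 1) → Prop)
    [DecidablePred p] :
    (Finset.univ.filter fun i => p (π i)).card = (Finset.univ.filter p).card := by
  apply Finset.card_nbij' (fun i => π i) (fun i => π.symm i)
  · intro a ha
    rw [Finset.mem_coe, Finset.mem_filter] at ha ⊢
    exact ⟨Finset.mem_univ _, ha.2⟩
  · intro a ha
    rw [Finset.mem_coe, Finset.mem_filter] at ha ⊢
    refine ⟨Finset.mem_univ _, ?_⟩
    simpa using ha.2
  · intro a _; simp
  · intro a _; simp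

lemma T_comp (π : Equiv.Perm (Fin (n + 1))) {y : Fin (n + 1) → ℝ} (hy : y ∈ T n) :
    y ∘ π ∈ T n := by
  classical
  obtain ⟨h1, h2⟩ := hy
  refine ⟨fun i => h1 (π i), fun j hj1 hjn => ?_⟩
  have := card_filter_comp π (fun i => y i < (j : ℝ))
  calc j + 1 ≤ (Finset.univ.filter fun i => y i < (j:ℝ)).card := h2 j hj1 hjn
  _ = (Finset.univ.filter fun i => y (π i) < (j:ℝ)).card := this.symm
  _ = (Finset.univ.filter fun i => (y ∘ π) i < (j:ℝ)).card := rfl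

lemma S_subset_T (hn : 0 < n) : S n ⊆ T n := by
  classical
  rintro x ⟨h0, hmono, hbd⟩
  have hxn : x ⟨n, by omega⟩ < n := hbd ⟨n, by omega⟩ n hn le_rfl rfl
  have hle : ∀ i : Fin (n + 1), (i : ℕ) ≤ n → x i < n := by
    intro i hi
    by_cases h : (i : ℕ) = n
    · have : i = ⟨n, by omega⟩ := Fin.ext h
      rw [this]; exact hxn
    · exact lt_trans (hmono i ⟨n, by omega⟩ (by rw [Fin.lt_def]; simp; omega)) hxn
  have hpos : ∀ i : Fin (n + 1), 0 < x i := by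
    intro i
    by_cases h : (i : ℕ) = 0
    · have : i = ⟨0, Nat.succ_pos _⟩ := Fin.ext h
      rw [this]; exact h0
    · exact lt_trans h0 (hmono ⟨0, Nat.succ_pos _⟩ i (by rw [Fin.lt_def]; show 0 < (i : ℕ); omega))
  refine ⟨fun i => ⟨hpos i, hle i (by omega)⟩, fun j hj1 hjn => ?_⟩
  -- at least the first j+1 coordinates are < j
  have hlt : ∀ i : Fin (n + 1), (i : ℕ) ≤ j → x i < j := by
    intro i hi
    by_cases h : (i : ℕ) = j
    · exact hbd i j hj1 hjn h
    · have hij : i < (⟨j, by omega⟩ : Fin (n + 1)) := by rw [Fin.lt_def]; simp; omega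
      exact lt_trans (hmono i _ hij) (hbd ⟨j, by omega⟩ j hj1 hjn rfl)
  have : j + 1 = (Finset.univ : Finset (Fin (j + 1))).card := by simp
  rw [this]
  apply Finset.card_le_card_of_injOn (fun k : Fin (j + 1) => Fin.castLE (by omega) k)
  · intro k _
    rw [Finset.mem_coe, Finset.mem_filter]
    exact ⟨Finset.mem_univ _, hlt _ (by simp [Fin.coe_castLE]; omega)⟩
  · intro a _ b _ hab
    exact Fin.castLE_injective _ hab

lemma strictMono_perm_eq {τ : Equiv.Perm (Fin (n + 1))} (hτ : StrictMono ⇑τ) :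
    τ = Equiv.refl _ := by
  have hsymm : StrictMono ⇑τ.symm := by
    intro a b hab
    by_contra hc
    push_neg at hc
    have := hτ.monotone hc
    simp only [Equiv.apply_symm_apply] at this
    exact absurd hab (not_lt.mpr this)
  apply Equiv.ext
  intro i
  haveI : WellFoundedLT (Fin (n + 1)) := inferInstance
  have h1 : i ≤ τ i := hτ.le_apply
  have h2 : i ≤ τ.symm i := hsymm.le_apply
  have h3 : τ i ≤ τ (τ.symm i) := hτ.monotone h2
  simp only [Equiv.apply_symm_apply] at h3
  exact le_antisymm h3 h1

lemma sorting_unique {y : Fin (n + 1) → ℝ} (hinj : Function.Injective y)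
    {π π' : Equiv.Perm (Fin (n + 1))} (h : StrictMono (y ∘ π)) (h' : StrictMono (y ∘ π')) :
    π = π' := by
  set τ : Equiv.Perm (Fin (n + 1)) := π.trans π'.symm with hτdef
  have hτ : StrictMono ⇑τ := by
    intro a b hab
    have hy : y (π a) < y (π b) := h hab
    have : (y ∘ π') (τ a) < (y ∘ π') (τ b) := by
      simpa [hτdef, Function.comp] using hy
    exact h'.lt_iff_lt.mp this
  have := strictMono_perm_eq hτ
  apply Equiv.ext
  intro i
  have : τ i = i := by rw [this]; rfl
  have : π'.symm (π i) = i := this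
  calc π i = π' (π'.symm (π i)) := by simp
  _ = π' i := by rw [this]

lemma card_val_lt (j : ℕ) :
    (Finset.univ.filter fun k : Fin (n + 1) => (k : ℕ) < j).card ≤ j := by
  classical
  have := Finset.card_le_card_of_injOn (fun k : Fin (n + 1) => (k : ℕ))
    (s := Finset.univ.filter fun k : Fin (n + 1) => (k : ℕ) < j) (t := Finset.range j)
    (fun a ha => by rw [Finset.mem_coe, Finset.mem_filter] at ha; rw [Finset.mem_coe, Finset.mem_range]; exact ha.2)
    (fun a _ b _ hab => Fin.ext hab)
  simpa using this

lemma sorted_mem_S (hn : 0 < n) {y : Fin (n + 1) → ℝ} (hy : y ∈ T n)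
    (hmono : StrictMono y) : y ∈ S n := by
  classical
  obtain ⟨h1, h2⟩ := hy
  refine ⟨(h1 _).1, fun i j hij => hmono hij, fun i j hj1 hjn hij => ?_⟩
  by_contra hc
  push_neg at hc
  have hsub : (Finset.univ.filter fun k : Fin (n + 1) => y k < (j : ℝ))
      ⊆ Finset.univ.filter fun k : Fin (n + 1) => (k : ℕ) < j := by
    intro k hk
    rw [Finset.mem_filter] at hk ⊢
    refine ⟨Finset.mem_univ _, ?_⟩
    by_contra hkj
    push_neg at hkj
    have : i ≤ k := by rw [Fin.le_def]; omega
    have : y i ≤ y k := hmono.monotone this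
    have : (j : ℝ) ≤ y k := le_trans hc this
    exact absurd hk.2 (not_lt.mpr this)
  have hcard := le_trans (Finset.card_le_card hsub) (card_val_lt j)
  have := h2 j hj1 hjn
  omega

def Dset (n : ℕ) : Set (Fin (n + 1) → ℝ) := {y | ∃ i j, i ≠ j ∧ y i = y j}

lemma measurableSet_D : MeasurableSet (Dset n) := by
  have : Dset n = ⋃ i, ⋃ j, {y : Fin (n + 1) → ℝ | i ≠ j ∧ y i = y j} := by
    ext y; simp [Dset]
  rw [this]
  refine MeasurableSet.iUnion fun i => MeasurableSet.iUnion fun j => ?_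
  by_cases hij : i = j
  · subst hij
    have : {y : Fin (n + 1) → ℝ | i ≠ i ∧ y i = y i} = ∅ := by ext y; simp
    rw [this]; exact MeasurableSet.empty
  · have : {y : Fin (n + 1) → ℝ | i ≠ j ∧ y i = y j} = {y : Fin (n + 1) → ℝ | y i = y j} := by
      ext y; simp [hij]
    rw [this]
    exact measurableSet_eq_fun (measurable_pi_apply _) (measurable_pi_apply _)

lemma volume_D : volume (Dset n) = 0 := volume_ties

lemma not_mem_D_inj {y : Fin (n + 1) → ℝ} (hy : y ∉ Dset n) : Function.Injective y := by
  intro a b hab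
  by_contra hne
  exact hy ⟨a, b, hne, hab⟩

lemma volume_T_eq_factorial (hn : 0 < n) :
    volume (T n) = ((n + 1)! : ℝ≥0∞) * volume (S n) := by
  classical
  set piece : Equiv.Perm (Fin (n + 1)) → Set (Fin (n + 1) → ℝ) :=
    fun π => ((fun y : Fin (n + 1) → ℝ => y ∘ π) ⁻¹' S n) \ Dset n with hpiece
  have hmeas : ∀ π, MeasurableSet (piece π) :=
    fun π => (measurableSet_S.preimage (measurePreserving_comp π).measurable).diff measurableSet_D
  have hvol : ∀ π, volume (piece π) = volume (S n) := by
    intro π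
    rw [hpiece]
    simp only
    rw [measure_diff_null volume_D]
    exact (measurePreserving_comp π).measure_preimage measurableSet_S.nullMeasurableSet
  have hdisj : ((Finset.univ : Finset (Equiv.Perm (Fin (n + 1)))) : Set (Equiv.Perm (Fin (n + 1)))).PairwiseDisjoint piece := by
    intro π _ π' _ hne
    rw [Function.onFun, Set.disjoint_left]
    rintro y ⟨hy1, hyD⟩ ⟨hy2, _⟩
    have hinj := not_mem_D_inj hyD
    have hm1 : StrictMono (y ∘ π) := fun a b h => hy1.2.1 _ _ h
    have hm2 : StrictMono (y ∘ π') := fun a b h => hy2.2.1 _ _ h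
    exact hne (sorting_unique hinj hm1 hm2)
  have hWvol : volume (⋃ π ∈ (Finset.univ : Finset (Equiv.Perm (Fin (n + 1)))), piece π)
      = ∑ π ∈ (Finset.univ : Finset (Equiv.Perm (Fin (n + 1)))), volume (piece π) :=
    measure_biUnion_finset hdisj (fun π _ => hmeas π)
  have hTW : volume (T n)
      = volume (⋃ π ∈ (Finset.univ : Finset (Equiv.Perm (Fin (n + 1)))), piece π) := by
    apply le_antisymm
    · have hsub : T n ⊆ (⋃ π ∈ (Finset.univ : Finset (Equiv.Perm (Fin (n + 1)))), piece π)
          ∪ Dset n := by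
        intro y hy
        by_cases hyD : y ∈ Dset n
        · exact Or.inr hyD
        · left
          have hinj := not_mem_D_inj hyD
          have hmono : Monotone (y ∘ Tuple.sort y) := Tuple.monotone_sort y
          have hstrict : StrictMono (y ∘ Tuple.sort y) :=
            hmono.strictMono_of_injective (hinj.comp (Equiv.injective _))
          have hSmem : y ∘ Tuple.sort y ∈ S n :=
            sorted_mem_S hn (T_comp (Tuple.sort y) hy) hstrict
          refine Set.mem_biUnion (Finset.mem_univ (Tuple.sort y)) ⟨hSmem, hyD⟩
      calc volume (T n)
          ≤ volume ((⋃ π ∈ (Finset.univ : Finset (Equiv.Perm (Fin (n + 1)))), piece π)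
            ∪ Dset n) := measure_mono hsub
        _ ≤ volume (⋃ π ∈ (Finset.univ : Finset (Equiv.Perm (Fin (n + 1)))), piece π)
            + volume (Dset n) := measure_union_le _ _
        _ = volume (⋃ π ∈ (Finset.univ : Finset (Equiv.Perm (Fin (n + 1)))), piece π) := by
            rw [volume_D, add_zero]
    · apply measure_mono
      refine Set.iUnion₂_subset fun π _ => ?_
      rintro y ⟨hy1, _⟩
      have h1 : y ∘ π ∈ T n := S_subset_T hn hy1
      have h2 : (y ∘ π) ∘ π.symm ∈ T n := T_comp π.symm h1
      have : (y ∘ π) ∘ ⇑π.symm = y := by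
        funext i; simp [Function.comp]
      rwa [this] at h2
  rw [hTW, hWvol]
  rw [Finset.sum_congr rfl (fun π _ => hvol π), Finset.sum_const, Finset.card_univ,
    Fintype.card_perm, Fintype.card_fin, nsmul_eq_mul]

def cell (n : ℕ) (r : Fin (n + 1) → Fin n) : Set (Fin (n + 1) → ℝ) :=
  Set.pi Set.univ fun i => Set.Ioo (((r i : ℕ) : ℝ)) (((r i : ℕ) : ℝ) + 1)

lemma volume_cell (r : Fin (n + 1) → Fin n) : volume (cell n r) = 1 := by
  rw [cell, volume_pi_pi]
  simp [Real.volume_Ioo]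

lemma measurableSet_cell (r : Fin (n + 1) → Fin n) : MeasurableSet (cell n r) :=
  MeasurableSet.univ_pi fun _ => measurableSet_Ioo

lemma cell_filter_eq (r : Fin (n + 1) → Fin n) {y : Fin (n + 1) → ℝ} (hy : y ∈ cell n r)
    (j : ℕ) :
    (Finset.univ.filter fun i => y i < (j : ℝ))
      = Finset.univ.filter fun i => (r i : ℕ) < j := by
  classical
  apply Finset.filter_congr
  intro i _
  obtain ⟨hl, hr⟩ := hy i (Set.mem_univ i)
  constructor
  · intro hyj
    exact_mod_cast lt_trans hl hyj
  · intro hrj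
    have h1 : ((r i : ℕ) : ℝ) + 1 ≤ j := by exact_mod_cast Nat.succ_le_of_lt hrj
    linarith

lemma cell_subset_T (r : Fin (n + 1) → Fin n) (hP : P n fun i => (r i : ℕ)) :
    cell n r ⊆ T n := by
  intro y hy
  constructor
  · intro i
    obtain ⟨hl, hr⟩ := hy i (Set.mem_univ i)
    constructor
    · have : (0 : ℝ) ≤ ((r i : ℕ) : ℝ) := by positivity
      linarith
    · have : ((r i : ℕ) : ℝ) + 1 ≤ n := by exact_mod_cast Nat.succ_le_of_lt (r i).isLt
      linarith
  · intro j hj1 hjn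
    rw [cell_filter_eq r hy j]
    exact hP j hj1 hjn

lemma T_cell_P (r : Fin (n + 1) → Fin n) {y : Fin (n + 1) → ℝ} (hy : y ∈ T n)
    (hc : y ∈ cell n r) : P n fun i => (r i : ℕ) := by
  intro j hj1 hjn
  have h := hy.2 j hj1 hjn
  rwa [cell_filter_eq r hc j] at h

lemma cell_disjoint {r r' : Fin (n + 1) → Fin n} (hne : r ≠ r') :
    Disjoint (cell n r) (cell n r') := by
  rw [Set.disjoint_left]
  intro y hy hy'
  apply hne
  funext i
  obtain ⟨h1, h2⟩ := hy i (Set.mem_univ i)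
  obtain ⟨h3, h4⟩ := hy' i (Set.mem_univ i)
  have b1 : (r i : ℕ) < (r' i : ℕ) + 1 := by exact_mod_cast lt_trans h1 h4
  have b2 : (r' i : ℕ) < (r i : ℕ) + 1 := by exact_mod_cast lt_trans h3 h2
  apply Fin.ext; omega

lemma T_subset_cells (hn : 0 < n) [DecidablePred fun r : Fin (n + 1) → Fin n =>
      P n fun i => ((r i : ℕ))] :
    T n ⊆ (⋃ r ∈ (Finset.univ.filter fun r : Fin (n + 1) → Fin n =>
        P n fun i => ((r i : ℕ))), cell n r)
      ∪ {y : Fin (n + 1) → ℝ | ∃ i, ∃ k : ℤ, y i = (k : ℝ)} := by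
  intro y hy
  by_cases hz : ∃ i, ∃ k : ℤ, y i = (k : ℝ)
  · exact Or.inr hz
  left
  push_neg at hz
  have hran : ∀ i, 0 < y i ∧ y i < n := fun i => hy.1 i
  have hfl : ∀ i, 0 ≤ ⌊y i⌋ := fun i => Int.floor_nonneg.mpr (le_of_lt (hran i).1)
  have hflt : ∀ i, ⌊y i⌋ < (n : ℤ) := by
    intro i
    apply Int.floor_lt.mpr
    exact_mod_cast (hran i).2
  set r : Fin (n + 1) → Fin n := fun i => ⟨(⌊y i⌋).toNat, by have := hfl i; have := hflt i; omega⟩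
    with hrdef
  have hcast : ∀ i, (((r i : ℕ)) : ℝ) = ((⌊y i⌋ : ℤ) : ℝ) := by
    intro i
    show (((⌊y i⌋).toNat : ℕ) : ℝ) = _
    exact_mod_cast congrArg (fun z : ℤ => (z : ℝ)) (Int.toNat_of_nonneg (hfl i))
  have hcell : y ∈ cell n r := by
    intro i _
    constructor
    · rw [hcast i]
      rcases lt_or_eq_of_le (Int.floor_le (y i)) with h | h
      · exact h
      · exact absurd h.symm (hz i ⌊y i⌋)
    · rw [hcast i]
      exact Int.lt_floor_add_one (y i)
  exact Set.mem_biUnion (Finset.mem_filter.2 ⟨Finset.mem_univ _, T_cell_P r hy hcell⟩) hcell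

lemma volume_T_card (hn : 0 < n) [DecidablePred fun r : Fin (n + 1) → Fin n =>
      P n fun i => ((r i : ℕ))] :
    volume (T n) = (((Finset.univ.filter fun r : Fin (n + 1) → Fin n =>
        P n fun i => ((r i : ℕ))).card : ℕ) : ℝ≥0∞) := by
  classical
  have hU : volume (⋃ r ∈ (Finset.univ.filter fun r : Fin (n + 1) → Fin n =>
        P n fun i => ((r i : ℕ))), cell n r)
      = ∑ r ∈ (Finset.univ.filter fun r : Fin (n + 1) → Fin n =>
        P n fun i => ((r i : ℕ))), volume (cell n r) :=
    measure_biUnion_finset (fun r _ r' _ hne => cell_disjoint hne) (fun r _ => measurableSet_cell r)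
  have hUT : volume (T n) = volume (⋃ r ∈ (Finset.univ.filter fun r : Fin (n + 1) → Fin n =>
        P n fun i => ((r i : ℕ))), cell n r) := by
    apply le_antisymm
    · calc volume (T n)
          ≤ volume ((⋃ r ∈ (Finset.univ.filter fun r : Fin (n + 1) → Fin n =>
              P n fun i => ((r i : ℕ))), cell n r)
            ∪ {y : Fin (n + 1) → ℝ | ∃ i, ∃ k : ℤ, y i = (k : ℝ)}) :=
            measure_mono (T_subset_cells hn)
        _ ≤ _ + volume {y : Fin (n + 1) → ℝ | ∃ i, ∃ k : ℤ, y i = (k : ℝ)} :=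
            measure_union_le _ _
        _ = _ := by rw [volume_ints, add_zero]
    · apply measure_mono
      refine Set.iUnion₂_subset fun r hr => ?_
      exact cell_subset_T r (Finset.mem_filter.mp hr).2
  rw [hUT, hU]
  rw [Finset.sum_congr rfl (fun r _ => volume_cell r), Finset.sum_const, nsmul_eq_mul, mul_one]

end Stmt8Aux

open Nat MeasureTheory

theorem stmt8 (n : ℕ) (hn : 0 < n) :
    volume {x : Fin (n + 1) → ℝ |
        0 < x ⟨0, Nat.succ_pos _⟩ ∧
        (∀ i j : Fin (n + 1), i < j → x i < x j) ∧
        (∀ i : Fin (n + 1), ∀ j : ℕ, 1 ≤ j → j ≤ n → (i : ℕ) = j → x i < j)} =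
      ENNReal.ofReal ((n : ℝ) ^ n / ((n + 1)! : ℝ)) := by
  classical
  have hSdef : {x : Fin (n + 1) → ℝ |
      0 < x ⟨0, Nat.succ_pos _⟩ ∧
      (∀ i j : Fin (n + 1), i < j → x i < x j) ∧
      (∀ i : Fin (n + 1), ∀ j : ℕ, 1 ≤ j → j ≤ n → (i : ℕ) = j → x i < j)} = Stmt8Aux.S n := rfl
  rw [hSdef]
  have h1 := Stmt8Aux.volume_T_eq_factorial (n := n) hn
  have h2 := Stmt8Aux.volume_T_card (n := n) hn
  have h3 := Stmt8Aux.card_good (n := n) hn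
  have hcard : (Finset.univ.filter fun r : Fin (n + 1) → Fin n =>
      Stmt8Aux.P n fun i => ((r i : ℕ))).card = n ^ n := by
    apply Nat.eq_of_mul_eq_mul_right hn
    rw [h3, ← pow_succ]
  have hmul : ((n + 1)! : ℝ≥0∞) * volume (Stmt8Aux.S n) = ((n ^ n : ℕ) : ℝ≥0∞) := by
    rw [← h1, h2, hcard]
  have hfac0 : ((n + 1)! : ℝ≥0∞) ≠ 0 := by
    simp [Nat.factorial_ne_zero]
  have hfactop : ((n + 1)! : ℝ≥0∞) ≠ ⊤ := ENNReal.natCast_ne_top _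
  have hvol : volume (Stmt8Aux.S n) = ((n ^ n : ℕ) : ℝ≥0∞) / ((n + 1)! : ℝ≥0∞) :=
    (ENNReal.eq_div_iff hfac0 hfactop).mpr hmul
  rw [hvol]
  rw [ENNReal.ofReal_div_of_pos (by exact_mod_cast Nat.factorial_pos (n + 1))]
  have e1 : ((n : ℝ)) ^ n = ((n ^ n : ℕ) : ℝ) := by push_cast; ring
  rw [e1, ENNReal.ofReal_natCast, ENNReal.ofReal_natCast]
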